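/- Let u ∈ L^p(Ω, m) and f ∈ L^q(Ω, m) with p, q conjugate exponents. Define F(t) = ∫_{{u > t}} (u − t) f dm for t ∈ ℝ. Then F is differentiable outside a countable set C ⊂ ℝ, and F'(t) = −∫_{{u > t}} f dm for every t ∈ ℝ \ C. -/

import Mathlib

open MeasureTheory Set ENNReal

/-- Differentiability of `F(t) = ∫_{{u > t}} (u − t) f dm` outside a countable set, with
`F'(t) = −∫_{{u > t}} f dm`. -/
theorem stmt16 {X : Type*} [MeasurableSpace X] (m : Measure X) [IsFiniteMeasure m]
    (p q : ℝ) (hp : 1 < p) (hq : 1 < q) (hpq : 1 / p + 1 / q = 1)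
    (u f : X → ℝ)
    (hu : MemLp u (ENNReal.ofReal p) m) (hf : MemLp f (ENNReal.ofReal q) m) :
    ∃ C : Set ℝ, C.Countable ∧ ∀ t ∉ C,
      HasDerivAt (fun τ => ∫ x in {x | τ < u x}, (u x - τ) * f x ∂m)
        (-∫ x in {x | t < u x}, f x ∂m) t := by
  obtain ⟨u', hu'meas, huu'⟩ := hu.aestronglyMeasurable
  have hu'm : Measurable u' := hu'meas.measurable
  -- the countable bad set
  refine ⟨{t : ℝ | 0 < m {x | u' x = t}}, Measure.countable_meas_level_set_pos hu'm, ?_⟩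
  intro t ht
  have ht0 : m {x | u' x = t} = 0 := by
    by_contra h
    exact ht (pos_iff_ne_zero.mpr h)
  -- basic integrability facts
  have hone_le : (1 : ℝ≥0∞) ≤ ENNReal.ofReal q := by
    rw [← ENNReal.ofReal_one]
    exact ENNReal.ofReal_le_ofReal hq.le
  have hfi : Integrable f m := hf.integrable hone_le
  have hconj : (1 : ℝ≥0∞) / 1 = 1 / ENNReal.ofReal p + 1 / ENNReal.ofReal q := by
    rw [one_div_one, one_div, one_div, ← ENNReal.ofReal_inv_of_pos (by linarith),
      ← ENNReal.ofReal_inv_of_pos (by linarith),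
      ← ENNReal.ofReal_add (by positivity) (by positivity)]
    rw [inv_eq_one_div, inv_eq_one_div, hpq, ENNReal.ofReal_one]
  have hufi : Integrable (fun x => u x * f x) m := by
    haveI : HolderTriple (ENNReal.ofReal p) (ENNReal.ofReal q) 1 := ⟨by simpa only [one_div] using hconj.symm⟩
    have : MemLp (u • f) 1 m := hf.smul hu
    exact memLp_one_iff_integrable.mp this
  have hu'fi : Integrable (fun x => u' x * f x) m :=
    hufi.congr (huu'.mono fun x hx => by dsimp only; rw [hx])
  -- the rewritten function
  have hsetae : ∀ τ : ℝ, ({x | τ < u x} : Set X) =ᵐ[m] {x | τ < u' x} := by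
    intro τ
    filter_upwards [huu'] with x hx
    show (τ < u x) = (τ < u' x)
    rw [hx]
  have hmsets : ∀ τ : ℝ, MeasurableSet {x | τ < u' x} := fun τ =>
    measurableSet_lt measurable_const hu'm
  have hfun : ∀ τ : ℝ, (∫ x in {x | τ < u x}, (u x - τ) * f x ∂m)
      = ∫ x, max (u' x - τ) 0 * f x ∂m := by
    intro τ
    rw [Measure.restrict_congr_set (hsetae τ)]
    have h1 : (∫ x in {x | τ < u' x}, (u x - τ) * f x ∂m)
        = ∫ x in {x | τ < u' x}, (u' x - τ) * f x ∂m := by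
      refine integral_congr_ae (ae_restrict_of_ae ?_)
      filter_upwards [huu'] with x hx
      rw [hx]
    rw [h1, ← integral_indicator (hmsets τ)]
    refine integral_congr_ae (Filter.Eventually.of_forall fun x => ?_)
    by_cases hx : τ < u' x
    · simp only [Set.indicator_apply, Set.mem_setOf_eq, if_pos hx,
        max_eq_left (sub_nonneg.2 hx.le)]
    · simp only [Set.indicator_apply, Set.mem_setOf_eq, if_neg hx,
        max_eq_right (sub_nonpos.2 (not_lt.mp hx)), zero_mul]
  -- derivative under the integral sign
  set F' : X → ℝ := fun x => -(({x | t < u' x}).indicator f x) with hF'def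
  have key : HasDerivAt (fun τ => ∫ x, max (u' x - τ) 0 * f x ∂m) (∫ x, F' x ∂m) t := by
    refine (hasDerivAt_integral_of_dominated_loc_of_lip (F := fun τ x => max (u' x - τ) 0 * f x)
      (bound := fun x => |f x|) (s := Metric.ball t 1) (Metric.ball_mem_nhds t one_pos) ?_ ?_ ?_ ?_ ?_ ?_).2
    · filter_upwards with τ
      exact (((hu'm.sub measurable_const).max
        measurable_const).aestronglyMeasurable.mul hf.aestronglyMeasurable)
    · refine (hu'fi.abs.add (hfi.abs.const_mul |t|)).mono'
        (((hu'm.sub measurable_const).max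
          measurable_const).aestronglyMeasurable.mul hf.aestronglyMeasurable) ?_
      filter_upwards with x
      have h1 : |max (u' x - t) 0| ≤ |u' x| + |t| := by
        rw [abs_of_nonneg (le_max_right _ _)]
        refine (max_le ?_ (by positivity))
        calc u' x - t ≤ |u' x - t| := le_abs_self _
          _ ≤ |u' x| + |t| := abs_sub _ _
      calc ‖max (u' x - t) 0 * f x‖ = |max (u' x - t) 0| * |f x| := abs_mul _ _
        _ ≤ (|u' x| + |t|) * |f x| := by
            exact mul_le_mul_of_nonneg_right h1 (abs_nonneg _)
        _ = |u' x * f x| + |t| * |f x| := by rw [add_mul, abs_mul]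
    · exact ((hf.aestronglyMeasurable.indicator (hmsets t)).neg)
    · filter_upwards with x
      have hl : LipschitzWith (Real.nnabs (|f x|))
          (fun τ : ℝ => max (u' x - τ) 0 * f x) := by
        refine LipschitzWith.of_dist_le_mul fun a b => ?_
        simp only [Real.dist_eq]
        have h1 : |max (u' x - a) 0 * f x - max (u' x - b) 0 * f x|
            = |max (u' x - a) 0 - max (u' x - b) 0| * |f x| := by
          rw [← sub_mul, abs_mul]
        rw [h1]
        have h2 : |max (u' x - a) 0 - max (u' x - b) 0| ≤ |a - b| := by
          calc |max (u' x - a) 0 - max (u' x - b) 0| ≤ |(u' x - a) - (u' x - b)| :=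
              abs_max_sub_max_le_abs _ _ _
            _ = |a - b| := by rw [abs_sub_comm a b]; congr 1; ring
        calc |max (u' x - a) 0 - max (u' x - b) 0| * |f x| ≤ |a - b| * |f x| :=
            mul_le_mul_of_nonneg_right h2 (abs_nonneg _)
          _ = ↑(Real.nnabs (|f x|)) * |a - b| := by
              rw [mul_comm, Real.coe_nnabs, abs_abs]
      exact hl.lipschitzOnWith
    · exact hfi.abs
    · have : ∀ᵐ x ∂m, u' x ≠ t := by
        rw [ae_iff]
        simpa using ht0
      filter_upwards [this] with x hx
      rcases lt_or_gt_of_ne hx with hlt | hgt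
      · -- u' x < t : function is eventually 0 near t
        have hF'x : F' x = 0 := by
          simp [hF'def, Set.indicator_of_notMem, not_lt.mpr hlt.le]
        rw [hF'x]
        have hev : (fun τ : ℝ => max (u' x - τ) 0 * f x) =ᶠ[nhds t] fun _ => 0 := by
          filter_upwards [Ioi_mem_nhds hlt] with τ (hτ : u' x < τ)
          rw [max_eq_right (sub_nonpos.2 hτ.le), zero_mul]
        exact (hasDerivAt_const t (0 : ℝ)).congr_of_eventuallyEq hev
      · -- t < u' x : function is eventually (u' x - τ) * f x near t
        have hF'x : F' x = -f x := by
          simp [hF'def, Set.indicator_of_mem, hgt]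
        rw [hF'x]
        have hd : HasDerivAt (fun τ : ℝ => (u' x - τ) * f x) (-f x) t := by
          have := ((hasDerivAt_id t).const_sub (u' x)).mul_const (f x)
          simpa using this
        refine hd.congr_of_eventuallyEq ?_
        filter_upwards [Iio_mem_nhds hgt] with τ (hτ : τ < u' x)
        rw [max_eq_left (sub_nonneg.2 hτ.le)]
  -- conclude
  have hval : (∫ x, F' x ∂m) = -∫ x in {x | t < u x}, f x ∂m := by
    rw [Measure.restrict_congr_set (hsetae t)]
    simp only [hF'def]
    rw [integral_neg, integral_indicator (hmsets t)]
  have hfeq : (fun τ => ∫ x in {x | τ < u x}, (u x - τ) * f x ∂m)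
      = fun τ => ∫ x, max (u' x - τ) 0 * f x ∂m := funext hfun
  rw [hfeq, ← hval]
  exact key
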